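/- For all d, d′ ≥ 0, 0 ≤ k ≤ d and 0 ≤ k′ ≤ d′, the equality [W_{d,k} ∗ W_{d′,k′}, 2(d+d′)] = [W_{d+d′, k+k′}, 2(d+d′)] holds in Markov(⊔SB) (for d = 0 or d′ = 0 the factor W_{0,0} is the trivial braid on one strand and the number of strands is adjusted accordingly); in particular, the class of W_{d,k} equals the product X^k Y^{d−k} of the classes X = [τ_1, 2] and Y = [τ_1 σ_1, 2]. -/

import Mathlib

open scoped TensorProduct DirectSum

set_option synthInstance.maxHeartbeats 1000000
set_option maxHeartbeats 2000000

namespace SingularHOMFLYPT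

/-- Generators of the singular braid monoid on `n` strands: `pos i` is `σ_{i+1}`,
`neg i` is `σ_{i+1}⁻¹` and `tau i` is `τ_{i+1}`, for `i : Fin (n-1)`. -/
inductive SBGen (n : ℕ) : Type
  | pos : Fin (n - 1) → SBGen n
  | neg : Fin (n - 1) → SBGen n
  | tau : Fin (n - 1) → SBGen n

open FreeMonoid in
/-- The defining relations of the singular braid monoid `SB_n` (Baez, Birman). -/
inductive SBRel (n : ℕ) : FreeMonoid (SBGen n) → FreeMonoid (SBGen n) → Prop
  | inv_right (i : Fin (n - 1)) : SBRel n (of (.pos i) * of (.neg i)) 1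
  | inv_left (i : Fin (n - 1)) : SBRel n (of (.neg i) * of (.pos i)) 1
  | sigma_tau (i : Fin (n - 1)) :
      SBRel n (of (.pos i) * of (.tau i)) (of (.tau i) * of (.pos i))
  | braid (i j : Fin (n - 1)) (h : (i : ℕ) + 1 = j ∨ (j : ℕ) + 1 = i) :
      SBRel n (of (.pos i) * of (.pos j) * of (.pos i))
        (of (.pos j) * of (.pos i) * of (.pos j))
  | braid_tau (i j : Fin (n - 1)) (h : (i : ℕ) + 1 = j ∨ (j : ℕ) + 1 = i) :
      SBRel n (of (.pos i) * of (.pos j) * of (.tau i))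
        (of (.tau j) * of (.pos i) * of (.pos j))
  | comm_ss (i j : Fin (n - 1)) (h : (i : ℕ) + 2 ≤ j ∨ (j : ℕ) + 2 ≤ i) :
      SBRel n (of (.pos i) * of (.pos j)) (of (.pos j) * of (.pos i))
  | comm_st (i j : Fin (n - 1)) (h : (i : ℕ) + 2 ≤ j ∨ (j : ℕ) + 2 ≤ i) :
      SBRel n (of (.pos i) * of (.tau j)) (of (.tau j) * of (.pos i))
  | comm_tt (i j : Fin (n - 1)) (h : (i : ℕ) + 2 ≤ j ∨ (j : ℕ) + 2 ≤ i) :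
      SBRel n (of (.tau i) * of (.tau j)) (of (.tau j) * of (.tau i))

/-- The congruence on the free monoid generated by the singular braid relations. -/
def SBcon (n : ℕ) : Con (FreeMonoid (SBGen n)) := conGen (SBRel n)

/-- The singular braid monoid on `n` strands, as a presented monoid. -/
abbrev SB (n : ℕ) : Type := (SBcon n).Quotient

/-- The canonical projection from the free monoid onto `SB n`. -/
def SB.mk {n : ℕ} : FreeMonoid (SBGen n) →* SB n := Con.mk' (SBcon n)

/-- The generator `σ_{i+1}` of `SB n`. -/
def sG {n : ℕ} (i : Fin (n - 1)) : SB n := SB.mk (.of (.pos i))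

/-- The generator `σ_{i+1}⁻¹` of `SB n`. -/
def sInvG {n : ℕ} (i : Fin (n - 1)) : SB n := SB.mk (.of (.neg i))

/-- The generator `τ_{i+1}` of `SB n`. -/
def tauG {n : ℕ} (i : Fin (n - 1)) : SB n := SB.mk (.of (.tau i))

theorem SB.sound {n : ℕ} {a b : FreeMonoid (SBGen n)} (h : SBRel n a b) :
    SB.mk a = SB.mk b :=
  Con.eq _ |>.2 (ConGen.Rel.of a b h)

/-- Lift a map on generators to a monoid homomorphism on `SB n`. -/
def SB.lift {n : ℕ} {M : Type*} [Monoid M] (f : SBGen n → M)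
    (h : ∀ a b, SBRel n a b → FreeMonoid.lift f a = FreeMonoid.lift f b) :
    SB n →* M :=
  Con.lift _ (FreeMonoid.lift f)
    (Con.conGen_le.2 fun a b hab => (Con.ker_rel _).2 (h a b hab))

@[simp] theorem SB.lift_mk {n : ℕ} {M : Type*} [Monoid M] (f : SBGen n → M)
    (h : ∀ a b, SBRel n a b → FreeMonoid.lift f a = FreeMonoid.lift f b)
    (w : FreeMonoid (SBGen n)) :
    SB.lift f h (SB.mk w) = FreeMonoid.lift f w :=
  Con.lift_coe _ w

/-- The number of singular points (`τ`-letters) of a generator. -/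
def degGen {n : ℕ} : SBGen n → Multiplicative ℕ
  | .tau _ => Multiplicative.ofAdd 1
  | _ => 1

/-- The monoid homomorphism `deg : SB n →* (ℕ, +)` counting singular points. -/
def degM {n : ℕ} : SB n →* Multiplicative ℕ :=
  SB.lift degGen (by
    rintro a b h
    cases h <;> simp [degGen, mul_comm])
/-- Shifting generators by `k`, viewing `SB n` inside `SB N` (strands `k+1, …, k+n`). -/
def shiftGen {n : ℕ} (N k : ℕ) (h : k + n ≤ N) : SBGen n → SBGen N
  | .pos i => .pos ⟨k + i, by have := i.2; omega⟩
  | .neg i => .neg ⟨k + i, by have := i.2; omega⟩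
  | .tau i => .tau ⟨k + i, by have := i.2; omega⟩

theorem shiftGen_rel {n : ℕ} (N k : ℕ) (h : k + n ≤ N) {a b : FreeMonoid (SBGen n)}
    (hab : SBRel n a b) :
    SBRel N (FreeMonoid.map (shiftGen N k h) a) (FreeMonoid.map (shiftGen N k h) b) := by
  cases hab <;>
    simp only [map_mul, map_one, FreeMonoid.map_of, shiftGen] <;>
    first
      | exact SBRel.inv_right _
      | exact SBRel.inv_left _
      | exact SBRel.sigma_tau _
      | (rename_i i j hij; exact SBRel.braid _ _ (by simp; omega))
      | (rename_i i j hij; first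
          | exact SBRel.braid_tau _ _ (by simp; omega)
          | exact SBRel.comm_ss _ _ (by simp; omega)
          | exact SBRel.comm_st _ _ (by simp; omega)
          | exact SBRel.comm_tt _ _ (by simp; omega))

/-- The monoid homomorphism `SB n →* SB N` placing a braid on the strands `k+1, …, k+n`. -/
def shiftHom {n : ℕ} (N k : ℕ) (h : k + n ≤ N) : SB n →* SB N :=
  Con.lift _ (SB.mk.comp (FreeMonoid.map (shiftGen N k h)))
    (Con.conGen_le.2 fun a b hab => (Con.ker_rel _).2 (SB.sound (shiftGen_rel N k h hab)))

/-- The natural inclusion `SB n →* SB N` (adding trivial strands on the right). -/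
def inclSB {n : ℕ} (N : ℕ) (h : n ≤ N) : SB n →* SB N := shiftHom N 0 (by omega)

/-- `α ∗ β`: the braid obtained by placing `β` (on `m` strands) above (to the right of)
`α` (on `n` strands), realized in `SB N` for `n + m ≤ N`. -/
def starIn {n m : ℕ} (N : ℕ) (h : n + m ≤ N) (α : SB n) (β : SB m) : SB N :=
  inclSB N (by omega) α * shiftHom N n h β
@[simp] theorem shiftHom_mk {n : ℕ} (N k : ℕ) (h : k + n ≤ N) (w : FreeMonoid (SBGen n)) :
    shiftHom N k h (SB.mk w) = SB.mk (FreeMonoid.map (shiftGen N k h) w) :=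
  Con.lift_coe _ w

theorem shiftHom_sG {n : ℕ} (N k : ℕ) (h : k + n ≤ N) (i : Fin (n - 1)) :
    shiftHom N k h (sG i) = sG ⟨k + i.1, by have := i.2; omega⟩ := rfl

theorem inclSB_sG {n : ℕ} (N : ℕ) (h : n ≤ N) (i : Fin (n - 1)) :
    inclSB N h (sG i) = sG ⟨0 + i.1, by have := i.2; omega⟩ := rfl

noncomputable section

/-- The field `ℂ(q)` of rational functions over `ℂ` in the variable `q`. -/
abbrev Kq : Type := RatFunc ℂ

/-- The field `ℂ(q,z) = ℂ(q)(z)` of rational functions over `ℂ` in the variables `q, z`. -/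
abbrev Lqz : Type := RatFunc Kq

/-- The variable `q`, as an element of `ℂ(q)`. -/
def qK : Kq := RatFunc.X

/-- The variable `z`, as an element of `ℂ(q,z)`. -/
def zL : Lqz := RatFunc.X

/-- The variable `q`, as an element of `ℂ(q,z)`. -/
def qL : Lqz := algebraMap Kq Lqz qK

/-- The Hecke relations `σ_k² = (q-1)σ_k + q` in the monoid algebra `ℂ(q)[SB_n]`. -/
def HeckeRel (n : ℕ) : MonoidAlgebra Kq (SB n) → MonoidAlgebra Kq (SB n) → Prop :=
  fun x y => ∃ i : Fin (n - 1),
    x = MonoidAlgebra.of Kq (SB n) (sG i) ^ 2 ∧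
    y = (qK - 1) • MonoidAlgebra.of Kq (SB n) (sG i) + qK • 1

/-- The singular Hecke algebra `H(SB_n)`: the quotient of `ℂ(q)[SB_n]` by the two-sided
ideal generated by the elements `σ_k² - (q-1)σ_k - q`. -/
abbrev Hecke (n : ℕ) : Type := RingQuot (HeckeRel n)

/-- The image of a singular braid in the singular Hecke algebra. -/
def heckeOf {n : ℕ} (β : SB n) : Hecke n :=
  RingQuot.mkAlgHom Kq (HeckeRel n) (MonoidAlgebra.of Kq (SB n) β)

/-- `H_z(SB_n) := ℂ(q,z) ⊗_{ℂ(q)} H(SB_n)`. -/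
abbrev HeckeZ (n : ℕ) : Type := Lqz ⊗[Kq] Hecke n

/-- The image of a singular braid in `H_z(SB_n)`. -/
def ofHZ {n : ℕ} (β : SB n) : HeckeZ n := (1 : Lqz) ⊗ₜ[Kq] heckeOf β

/-- The algebra homomorphism `H(SB_n) → H(SB_{n+1})` induced by the natural inclusion
`SB_n ↪ SB_{n+1}`. -/
def heckeIncl (n : ℕ) : Hecke n →ₐ[Kq] Hecke (n + 1) :=
  RingQuot.liftAlgHom Kq
    ⟨((RingQuot.mkAlgHom Kq (HeckeRel (n + 1))).comp
        (MonoidAlgebra.mapDomainAlgHom Kq Kq (inclSB (n + 1) (Nat.le_succ n)))),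
      by
        rintro x y ⟨i, rfl, rfl⟩
        have hi := i.2
        set i' : Fin ((n + 1) - 1) := ⟨0 + i.1, by omega⟩ with hi'
        have hgen : (MonoidAlgebra.mapDomainAlgHom Kq Kq (inclSB (n + 1) (Nat.le_succ n)))
            (MonoidAlgebra.of Kq (SB n) (sG i)) = MonoidAlgebra.of Kq (SB (n + 1)) (sG i') := by
          rw [MonoidAlgebra.of_apply, MonoidAlgebra.mapDomainAlgHom_apply,
            MonoidAlgebra.mapDomain_single, inclSB_sG, MonoidAlgebra.of_apply]
        have hrel : HeckeRel (n + 1) (MonoidAlgebra.of Kq (SB (n + 1)) (sG i') ^ 2)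
            ((qK - 1) • MonoidAlgebra.of Kq (SB (n + 1)) (sG i') + qK • 1) := ⟨i', rfl, rfl⟩
        have hmk := RingQuot.mkAlgHom_rel Kq hrel
        simp only [map_pow, map_add, map_smul, map_one] at hmk
        simp only [AlgHom.coe_comp, Function.comp_apply, map_pow, map_add, map_smul, map_one,
          hgen]
        exact hmk⟩

/-- The algebra homomorphism `ι_n : H_z(SB_n) → H_z(SB_{n+1})`. -/
def iotaHZ (n : ℕ) : HeckeZ n →ₐ[Lqz] HeckeZ (n + 1) :=
  Algebra.TensorProduct.map (AlgHom.id Lqz Lqz) (heckeIncl n)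
/-- The `ℂ(q)`-subspace `H(S_dB_n)` of the singular Hecke algebra spanned by the images of
the singular braids with `d` singular points. -/
def HSd (n d : ℕ) : Submodule Kq (Hecke n) :=
  Submodule.span Kq
    {x | ∃ β : SB n, degM β = Multiplicative.ofAdd d ∧ x = heckeOf β}

/-- The `ℂ(q,z)`-subspace `H_z(S_dB_n)` of `H_z(SB_n)` spanned by the images of the singular
braids with `d` singular points. -/
def HzSd (n d : ℕ) : Submodule Lqz (HeckeZ n) :=
  Submodule.span Lqz
    {x | ∃ β : SB n, degM β = Multiplicative.ofAdd d ∧ x = ofHZ β}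

/-- Strand counts: the positive natural numbers. -/
abbrev Idx : Type := {n : ℕ // 0 < n}

/-- The direct sum `⊕_{n ≥ 1} H_z(SB_n)`. -/
abbrev MV : Type := ⨁ i : Idx, HeckeZ i.1

instance instAddCommGroupHeckeZ (n : ℕ) : AddCommGroup (HeckeZ n) := inferInstance
instance instModuleHeckeZ (n : ℕ) : Module Lqz (HeckeZ n) := inferInstance
instance instAddCommGroupMV : AddCommGroup MV := inferInstance
instance instModuleMV : Module Lqz MV := inferInstance

/-- The canonical inclusion of the `n`-th summand of `⊕_{n ≥ 1} H_z(SB_n)`. -/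
def mvof (i : Idx) : HeckeZ i.1 →ₗ[Lqz] MV :=
  DirectSum.lof Lqz Idx (fun i => HeckeZ i.1) i

/-- Successor of a strand count. -/
def succI (i : Idx) : Idx := ⟨i.1 + 1, Nat.succ_pos _⟩

/-- The generator `σ_n` of `SB_{n+1}`. -/
def sigmaLast (i : Idx) : SB (i.1 + 1) := sG ⟨i.1 - 1, Nat.sub_lt i.2 one_pos⟩

/-- The Markov relations in `⊕_{n ≥ 1} H_z(SB_n)`: trace relations, stabilization relations
and positive Markov relations. -/
def markovRels : Set MV :=
  {x | ∃ (i : Idx) (a b : HeckeZ i.1), x = mvof i (a * b) - mvof i (b * a)} ∪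
  {x | ∃ (i : Idx) (a : HeckeZ i.1), x = mvof i a - mvof (succI i) (iotaHZ i.1 a)} ∪
  {x | ∃ (i : Idx) (a : HeckeZ i.1),
    x = mvof (succI i) (iotaHZ i.1 a * ofHZ (sigmaLast i)) - zL • mvof i a}

/-- The Markov module `Markov(⊔SB)`. -/
abbrev Markov : Type := MV ⧸ Submodule.span Lqz markovRels

instance instAddCommGroupMarkov : AddCommGroup Markov := inferInstance
instance instModuleMarkov : Module Lqz Markov := inferInstance

/-- The class `[a, m]` in the Markov module of an element `a ∈ H_z(SB_m)`. -/
def markovClass (m : ℕ) (hm : 0 < m) (a : HeckeZ m) : Markov :=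
  Submodule.Quotient.mk (mvof ⟨m, hm⟩ a)

/-- The class `[β, m]` in the Markov module of a singular braid `β ∈ SB_m`. -/
def braidClass (m : ℕ) (hm : 0 < m) (β : SB m) : Markov :=
  markovClass m hm (ofHZ β)

/-- The direct sum `⊕_{n ≥ 1} H_z(S_dB_n)`. -/
abbrev MVD (d : ℕ) : Type := ⨁ i : Idx, ↥(HzSd i.1 d)

instance instAddCommGroupMVD (d : ℕ) : AddCommGroup (MVD d) := inferInstance
instance instModuleMVD (d : ℕ) : Module Lqz (MVD d) := inferInstance

/-- The canonical inclusion of the `n`-th summand of `⊕_{n ≥ 1} H_z(S_dB_n)`. -/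
def mvdof (d : ℕ) (i : Idx) : ↥(HzSd i.1 d) →ₗ[Lqz] MVD d :=
  DirectSum.lof Lqz Idx (fun i => ↥(HzSd i.1 d)) i

/-- The Markov relations in `⊕_{n ≥ 1} H_z(S_dB_n)`. -/
def markovRelsD (d : ℕ) : Set (MVD d) :=
  {x | ∃ (i : Idx) (k l : ℕ), k + l = d ∧ ∃ (a b : HeckeZ i.1),
    a ∈ HzSd i.1 k ∧ b ∈ HzSd i.1 l ∧
    ∃ (hab : a * b ∈ HzSd i.1 d) (hba : b * a ∈ HzSd i.1 d),
      x = mvdof d i ⟨a * b, hab⟩ - mvdof d i ⟨b * a, hba⟩} ∪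
  {x | ∃ (i : Idx) (a : HeckeZ i.1) (ha : a ∈ HzSd i.1 d)
      (ha' : iotaHZ i.1 a ∈ HzSd (i.1 + 1) d),
    x = mvdof d i ⟨a, ha⟩ - mvdof d (succI i) ⟨iotaHZ i.1 a, ha'⟩} ∪
  {x | ∃ (i : Idx) (a : HeckeZ i.1) (ha : a ∈ HzSd i.1 d)
      (ha' : iotaHZ i.1 a * ofHZ (sigmaLast i) ∈ HzSd (i.1 + 1) d),
    x = mvdof d (succI i) ⟨iotaHZ i.1 a * ofHZ (sigmaLast i), ha'⟩ - zL • mvdof d i ⟨a, ha⟩}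

/-- The `d`-th Markov module `Markov(⊔S_dB)`. -/
abbrev MarkovD (d : ℕ) : Type := MVD d ⧸ Submodule.span Lqz (markovRelsD d)

instance instAddCommGroupMarkovD (d : ℕ) : AddCommGroup (MarkovD d) := inferInstance
instance instModuleMarkovD (d : ℕ) : Module Lqz (MarkovD d) := inferInstance

/-- The class `[β, m]` in the `d`-th Markov module of a singular braid `β ∈ S_dB_m`
(defined to be `0` if `β` does not have exactly `d` singular points). -/
def classD (d m : ℕ) (hm : 0 < m) (β : SB m) : MarkovD d :=
  if h : degM β = Multiplicative.ofAdd d then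
    Submodule.Quotient.mk (mvdof d ⟨m, hm⟩ ⟨ofHZ β, Submodule.subset_span ⟨β, h, rfl⟩⟩)
  else 0
/-- The singular braid `W_{d,k} = τ_1 τ_3 ⋯ τ_{2k-1} (τ_{2k+1}σ_{2k+1}) ⋯ (τ_{2d-1}σ_{2d-1})`
in `SB_{2d}` (for `1 ≤ d` and `k ≤ d`). -/
def W (d k : ℕ) : SB (2 * d) :=
  ((List.range d).map (fun j =>
    if h : 2 * j < 2 * d - 1 then
      (if j < k then tauG ⟨2 * j, h⟩ else tauG ⟨2 * j, h⟩ * sG ⟨2 * j, h⟩)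
    else 1)).prod

/-- The class of `W_{d,k}` in the `d`-th Markov module: `[W_{d,k}, 2d]` for `d ≥ 1`, and the
class `[W_{0,0}, 1]` of the trivial braid on one strand for `d = 0`. -/
def WclassD (d k : ℕ) : MarkovD d :=
  if hd : d = 0 then hd ▸ classD 0 1 one_pos 1
  else classD d (2 * d) (by omega) (W d k)

/-- The singular braid `α_0 τ_{i_1} α_1 τ_{i_2} ⋯ τ_{i_d} α_d`. -/
def sbWord {m d : ℕ} (α : Fin (d + 1) → SB m) (idx : Fin d → Fin (m - 1)) : SB m :=
  α 0 * ((List.ofFn fun j : Fin d => tauG (idx j) * α j.succ).prod)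

/-- The singular braid `α_0 τ_{i_1} α_1 ⋯ τ_{i_{k-1}} α_{k-1} x α_k τ_{i_{k+1}} ⋯ τ_{i_d} α_d`
obtained from `α_0 τ_{i_1} α_1 ⋯ τ_{i_d} α_d` by replacing the letter `τ_{i_k}` by `x`. -/
def sbWordRepl {m d : ℕ} (α : Fin (d + 1) → SB m) (idx : Fin d → Fin (m - 1))
    (k : Fin d) (x : SB m) : SB m :=
  α 0 * ((List.ofFn fun j : Fin d => (if j = k then x else tauG (idx j)) * α j.succ).prod)

/-- `RepGen false i = 1` (deleting a `τ` letter) and `RepGen true i = σ_{i+1}` (replacing a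
`τ` letter by the corresponding `σ` letter). -/
def RepGen {m : ℕ} (ε : Bool) (i : Fin (m - 1)) : SB m := if ε then sG i else 1

/-- `IsG d ε g` says that the linear map `g : Markov(⊔S_dB) → Markov(⊔S_{d-1}B)` is induced
by the family of maps `f_{n,ε}` (deletion of one `τ` letter for `ε = false`, replacement of one
`τ` letter by the corresponding `σ` letter for `ε = true`), i.e. that
`g([β,n]) = [f_{n,ε}(β), n]` for every singular braid `β ∈ S_dB_n`. -/
def IsG (d : ℕ) (ε : Bool) (g : MarkovD d →ₗ[Lqz] MarkovD (d - 1)) : Prop :=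
  ∀ (m : ℕ) (hm : 0 < m) (α : Fin (d + 1) → SB m) (idx : Fin d → Fin (m - 1)),
    (∀ j, degM (α j) = Multiplicative.ofAdd 0) →
    g (classD d m hm (sbWord α idx)) =
      ∑ k : Fin d, classD (d - 1) m hm (sbWordRepl α idx k (RepGen ε (idx k)))

/-- The `ℂ(q,z)`-vector space freely spanned by the set `S_dB_m` of singular braids on `m`
strands with `d` singular points. -/
abbrev FreeSd (m d : ℕ) : Type :=
  {β : SB m // degM β = Multiplicative.ofAdd d} →₀ Lqz

/-- The basis element of `ℂ(q,z)[S_dB_m]` corresponding to a braid `β ∈ S_dB_m` (defined to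
be `0` if `β` does not have exactly `d` singular points). -/
def freeElem {m : ℕ} (d : ℕ) (β : SB m) : FreeSd m d :=
  if h : degM β = Multiplicative.ofAdd d then Finsupp.single ⟨β, h⟩ 1 else 0

/-- Iterated product (power) with respect to a given bilinear multiplication. -/
def powAux (mul : Markov →ₗ[Lqz] Markov →ₗ[Lqz] Markov) (one x : Markov) : ℕ → Markov
  | 0 => one
  | k + 1 => mul x (powAux mul one x k)
/-! ### Auxiliary infrastructure -/

section Aux

/-- basic relation lemmas for the generators of `SB n` -/
theorem sG_sInvG {n : ℕ} (i : Fin (n - 1)) : sG i * sInvG i = 1 := by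
  simpa [sG, sInvG, map_mul, map_one] using SB.sound (SBRel.inv_right i)

theorem sInvG_sG {n : ℕ} (i : Fin (n - 1)) : sInvG i * sG i = 1 := by
  simpa [sG, sInvG, map_mul, map_one] using SB.sound (SBRel.inv_left i)

theorem sG_braid {n : ℕ} (i j : Fin (n - 1)) (h : (i : ℕ) + 1 = j ∨ (j : ℕ) + 1 = i) :
    sG i * sG j * sG i = sG j * sG i * sG j := by
  simpa [sG, map_mul] using SB.sound (SBRel.braid i j h)

theorem sG_braid_tau {n : ℕ} (i j : Fin (n - 1)) (h : (i : ℕ) + 1 = j ∨ (j : ℕ) + 1 = i) :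
    sG i * sG j * tauG i = tauG j * sG i * sG j := by
  simpa [sG, tauG, map_mul] using SB.sound (SBRel.braid_tau i j h)

theorem sG_comm_ss {n : ℕ} (i j : Fin (n - 1)) (h : (i : ℕ) + 2 ≤ j ∨ (j : ℕ) + 2 ≤ i) :
    sG i * sG j = sG j * sG i := by
  simpa [sG, map_mul] using SB.sound (SBRel.comm_ss i j h)

theorem sG_comm_st {n : ℕ} (i j : Fin (n - 1)) (h : (i : ℕ) + 2 ≤ j ∨ (j : ℕ) + 2 ≤ i) :
    sG i * tauG j = tauG j * sG i := by
  simpa [sG, tauG, map_mul] using SB.sound (SBRel.comm_st i j h)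

theorem tauG_comm_tt {n : ℕ} (i j : Fin (n - 1)) (h : (i : ℕ) + 2 ≤ j ∨ (j : ℕ) + 2 ≤ i) :
    tauG i * tauG j = tauG j * tauG i := by
  simpa [tauG, map_mul] using SB.sound (SBRel.comm_tt i j h)

/-- total ("junk") versions of the generators, indexed by `ℕ` -/
def sigN (N i : ℕ) : SB N := if h : i < N - 1 then sG ⟨i, h⟩ else 1

def sinvN (N i : ℕ) : SB N := if h : i < N - 1 then sInvG ⟨i, h⟩ else 1

def tauN (N i : ℕ) : SB N := if h : i < N - 1 then tauG ⟨i, h⟩ else 1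

theorem sigN_sinvN (N i : ℕ) : sigN N i * sinvN N i = 1 := by
  by_cases h : i < N - 1 <;> simp [sigN, sinvN, h, sG_sInvG]

theorem sinvN_sigN (N i : ℕ) : sinvN N i * sigN N i = 1 := by
  by_cases h : i < N - 1 <;> simp [sigN, sinvN, h, sInvG_sG]

theorem sigN_comm {N i j : ℕ} (h : i + 2 ≤ j ∨ j + 2 ≤ i) :
    sigN N i * sigN N j = sigN N j * sigN N i := by
  by_cases hi : i < N - 1
  · by_cases hj : j < N - 1
    · simp only [sigN, dif_pos hi, dif_pos hj]
      exact sG_comm_ss ⟨i, hi⟩ ⟨j, hj⟩ h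
    · simp [sigN, hj]
  · simp [sigN, hi]

theorem sig_tau_comm {N i j : ℕ} (h : i + 2 ≤ j ∨ j + 2 ≤ i) :
    sigN N i * tauN N j = tauN N j * sigN N i := by
  by_cases hi : i < N - 1
  · by_cases hj : j < N - 1
    · simp only [sigN, tauN, dif_pos hi, dif_pos hj]
      exact sG_comm_st ⟨i, hi⟩ ⟨j, hj⟩ h
    · simp [tauN, hj]
  · simp [sigN, hi]

theorem tau_tau_comm {N i j : ℕ} (h : i + 2 ≤ j ∨ j + 2 ≤ i) :
    tauN N i * tauN N j = tauN N j * tauN N i := by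
  by_cases hi : i < N - 1
  · by_cases hj : j < N - 1
    · simp only [tauN, dif_pos hi, dif_pos hj]
      exact tauG_comm_tt ⟨i, hi⟩ ⟨j, hj⟩ h
    · simp [tauN, hj]
  · simp [tauN, hi]

theorem sigN_braid {N i : ℕ} (h : i + 1 < N - 1) :
    sigN N i * sigN N (i + 1) * sigN N i = sigN N (i + 1) * sigN N i * sigN N (i + 1) := by
  have hi : i < N - 1 := by omega
  simp only [sigN, dif_pos hi, dif_pos h]
  exact sG_braid ⟨i, hi⟩ ⟨i + 1, h⟩ (Or.inl rfl)

theorem braid_tau_up {N i : ℕ} (h : i + 1 < N - 1) :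
    sigN N i * sigN N (i + 1) * tauN N i = tauN N (i + 1) * sigN N i * sigN N (i + 1) := by
  have hi : i < N - 1 := by omega
  simp only [sigN, tauN, dif_pos hi, dif_pos h]
  exact sG_braid_tau ⟨i, hi⟩ ⟨i + 1, h⟩ (Or.inl rfl)

theorem braid_tau_down {N i : ℕ} (h : i + 1 < N - 1) :
    sigN N (i + 1) * sigN N i * tauN N (i + 1) = tauN N i * sigN N (i + 1) * sigN N i := by
  have hi : i < N - 1 := by omega
  simp only [sigN, tauN, dif_pos hi, dif_pos h]
  exact sG_braid_tau ⟨i + 1, h⟩ ⟨i, hi⟩ (Or.inr rfl)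

end Aux

section Swap

private theorem cassoc {M : Type*} [Monoid M] {a b c d : M} (h : a * b = c * d) (x : M) :
    a * (b * x) = c * (d * x) := by rw [← mul_assoc, h, mul_assoc]

private theorem cassoc3 {M : Type*} [Monoid M] {a b c d e f : M} (h : a * b * c = d * e * f)
    (x : M) : a * (b * (c * x)) = d * (e * (f * x)) := by
  rw [← mul_assoc, ← mul_assoc, h, mul_assoc, mul_assoc]

private theorem rassoc2 {M : Type*} [Monoid M] {a b c d e f : M} (h : a * b * c = d * e * f) :
    a * (b * c) = d * (e * f) := by rw [← mul_assoc, h, mul_assoc]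

/-- the braid swapping the strand pairs `{2j+1, 2j+2}` and `{2j+3, 2j+4}` -/
def swapB (N j : ℕ) : SB N :=
  sigN N (2 * j + 1) * sigN N (2 * j) * sigN N (2 * j + 2) * sigN N (2 * j + 1)

def swapBinv (N j : ℕ) : SB N :=
  sinvN N (2 * j + 1) * sinvN N (2 * j + 2) * sinvN N (2 * j) * sinvN N (2 * j + 1)

private theorem cancel {M : Type*} [Monoid M] {u v : M} (h : u * v = 1) (x : M) :
    u * (v * x) = x := by rw [← mul_assoc, h, one_mul]

theorem swapB_mul_inv (N j : ℕ) : swapB N j * swapBinv N j = 1 := by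
  unfold swapB swapBinv
  simp only [mul_assoc]
  rw [cancel (sigN_sinvN N (2 * j + 1)), cancel (sigN_sinvN N (2 * j + 2)),
    cancel (sigN_sinvN N (2 * j))]
  exact sigN_sinvN N (2 * j + 1)

theorem swapBinv_mul (N j : ℕ) : swapBinv N j * swapB N j = 1 := by
  unfold swapB swapBinv
  simp only [mul_assoc]
  rw [cancel (sinvN_sigN N (2 * j + 1)), cancel (sinvN_sigN N (2 * j)),
    cancel (sinvN_sigN N (2 * j + 2))]
  exact sinvN_sigN N (2 * j + 1)

section SwapConj

variable {N j : ℕ} (H : 2 * j + 2 < N - 1)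

theorem swapB_sig_a (H : 2 * j + 2 < N - 1) :
    swapB N j * sigN N (2 * j) = sigN N (2 * j + 2) * swapB N j := by
  have hac : sigN N (2 * j) * sigN N (2 * j + 2) = sigN N (2 * j + 2) * sigN N (2 * j) :=
    sigN_comm (Or.inl (by omega))
  have hca := hac.symm
  have hab : sigN N (2 * j) * (sigN N (2 * j + 1) * sigN N (2 * j)) =
      sigN N (2 * j + 1) * (sigN N (2 * j) * sigN N (2 * j + 1)) :=
    rassoc2 (sigN_braid (by omega))
  have hbc : sigN N (2 * j + 1) * sigN N (2 * j + 2) * sigN N (2 * j + 1) =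
      sigN N (2 * j + 2) * sigN N (2 * j + 1) * sigN N (2 * j + 2) :=
    sigN_braid (i := 2 * j + 1) (by omega)
  unfold swapB
  simp only [mul_assoc]
  rw [cassoc hac, hab, cassoc3 hbc, cassoc hca]

theorem swapB_sig_c (H : 2 * j + 2 < N - 1) :
    swapB N j * sigN N (2 * j + 2) = sigN N (2 * j) * swapB N j := by
  have hcbc : sigN N (2 * j + 2) * (sigN N (2 * j + 1) * sigN N (2 * j + 2)) =
      sigN N (2 * j + 1) * (sigN N (2 * j + 2) * sigN N (2 * j + 1)) :=
    (rassoc2 (sigN_braid (i := 2 * j + 1) (by omega))).symm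
  have hbab : sigN N (2 * j + 1) * sigN N (2 * j) * sigN N (2 * j + 1) =
      sigN N (2 * j) * sigN N (2 * j + 1) * sigN N (2 * j) := (sigN_braid (by omega)).symm
  unfold swapB
  simp only [mul_assoc]
  rw [hcbc, cassoc3 hbab]

theorem swapB_tau_a (H : 2 * j + 2 < N - 1) :
    swapB N j * tauN N (2 * j) = tauN N (2 * j + 2) * swapB N j := by
  have hac : sigN N (2 * j) * sigN N (2 * j + 2) = sigN N (2 * j + 2) * sigN N (2 * j) :=
    sigN_comm (Or.inl (by omega))
  have hca := hac.symm
  have huba : sigN N (2 * j) * (sigN N (2 * j + 1) * tauN N (2 * j)) =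
      tauN N (2 * j + 1) * (sigN N (2 * j) * sigN N (2 * j + 1)) :=
    rassoc2 (braid_tau_up (by omega))
  have hubb : sigN N (2 * j + 1) * sigN N (2 * j + 2) * tauN N (2 * j + 1) =
      tauN N (2 * j + 2) * sigN N (2 * j + 1) * sigN N (2 * j + 2) :=
    braid_tau_up (i := 2 * j + 1) (by omega)
  unfold swapB
  simp only [mul_assoc]
  rw [cassoc hac, huba, cassoc3 hubb, cassoc hca]

theorem swapB_tau_c (H : 2 * j + 2 < N - 1) :
    swapB N j * tauN N (2 * j + 2) = tauN N (2 * j) * swapB N j := by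
  have hdownb : sigN N (2 * j + 2) * (sigN N (2 * j + 1) * tauN N (2 * j + 2)) =
      tauN N (2 * j + 1) * (sigN N (2 * j + 2) * sigN N (2 * j + 1)) :=
    rassoc2 (braid_tau_down (i := 2 * j + 1) (by omega))
  have hdowna : sigN N (2 * j + 1) * sigN N (2 * j) * tauN N (2 * j + 1) =
      tauN N (2 * j) * sigN N (2 * j + 1) * sigN N (2 * j) := braid_tau_down (by omega)
  unfold swapB
  simp only [mul_assoc]
  rw [hdownb, cassoc3 hdowna]

end SwapConj

/-- the two-strand block `τ_{2j+1}` (for `true`) or `τ_{2j+1}σ_{2j+1}` (for `false`) -/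
def blkN (N j : ℕ) : Bool → SB N
  | true => tauN N (2 * j)
  | false => tauN N (2 * j) * sigN N (2 * j)

private theorem comm_mul {M : Type*} [Monoid M] {g x y : M} (hx : g * x = x * g)
    (hy : g * y = y * g) : g * (x * y) = x * y * g := by
  rw [← mul_assoc, hx, mul_assoc, hy, ← mul_assoc]

private theorem comm_mul' {M : Type*} [Monoid M] {x y z : M} (hx : x * z = z * x)
    (hy : y * z = z * y) : x * y * z = z * (x * y) := by
  rw [mul_assoc, hy, ← mul_assoc, hx, mul_assoc]

/-- `swapB N j` exchanges the neighbouring blocks `j` and `j+1`. -/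
theorem swapB_blk_a (H : 2 * j + 2 < N - 1) (b : Bool) :
    swapB N j * blkN N j b = blkN N (j + 1) b * swapB N j := by
  have h2 : 2 * (j + 1) = 2 * j + 2 := by ring
  cases b
  · show swapB N j * (tauN N (2 * j) * sigN N (2 * j)) =
      tauN N (2 * (j + 1)) * sigN N (2 * (j + 1)) * swapB N j
    rw [h2, ← mul_assoc, swapB_tau_a H, mul_assoc, swapB_sig_a H, ← mul_assoc]
  · show swapB N j * tauN N (2 * j) = tauN N (2 * (j + 1)) * swapB N j
    rw [h2, swapB_tau_a H]

theorem swapB_blk_c (H : 2 * j + 2 < N - 1) (b : Bool) :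
    swapB N j * blkN N (j + 1) b = blkN N j b * swapB N j := by
  have h2 : 2 * (j + 1) = 2 * j + 2 := by ring
  cases b
  · show swapB N j * (tauN N (2 * (j + 1)) * sigN N (2 * (j + 1))) =
      tauN N (2 * j) * sigN N (2 * j) * swapB N j
    rw [h2, ← mul_assoc, swapB_tau_c H, mul_assoc, swapB_sig_c H, ← mul_assoc]
  · show swapB N j * tauN N (2 * (j + 1)) = tauN N (2 * j) * swapB N j
    rw [h2, swapB_tau_c H]

/-- `swapB N j` commutes with all blocks other than `j` and `j+1`. -/
theorem swapB_blk_far {N j m : ℕ} (h : m < j ∨ j + 2 ≤ m) (b : Bool) :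
    swapB N j * blkN N m b = blkN N m b * swapB N j := by
  have key : ∀ z : SB N, (∀ i : ℕ, (i = 2 * j ∨ i = 2 * j + 1 ∨ i = 2 * j + 2) →
      sigN N i * z = z * sigN N i) → swapB N j * z = z * swapB N j := by
    intro z hz
    exact comm_mul' (comm_mul' (comm_mul' (hz _ (Or.inr (Or.inl rfl)))
      (hz _ (Or.inl rfl))) (hz _ (Or.inr (Or.inr rfl)))) (hz _ (Or.inr (Or.inl rfl)))
  have hst : ∀ i : ℕ, (i = 2 * j ∨ i = 2 * j + 1 ∨ i = 2 * j + 2) →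
      sigN N i * tauN N (2 * m) = tauN N (2 * m) * sigN N i := fun i hi =>
    sig_tau_comm (by omega)
  have hss : ∀ i : ℕ, (i = 2 * j ∨ i = 2 * j + 1 ∨ i = 2 * j + 2) →
      sigN N i * sigN N (2 * m) = sigN N (2 * m) * sigN N i := fun i hi =>
    sigN_comm (by omega)
  cases b with
  | false =>
    show swapB N j * (tauN N (2 * m) * sigN N (2 * m)) =
      tauN N (2 * m) * sigN N (2 * m) * swapB N j
    exact comm_mul (key _ hst) (key _ hss)
  | true =>
    show swapB N j * tauN N (2 * m) = tauN N (2 * m) * swapB N j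
    exact key _ hst

/-- blocks at distinct positions commute -/
theorem blkN_comm {N m m' : ℕ} (h : m ≠ m') (b b' : Bool) :
    blkN N m b * blkN N m' b' = blkN N m' b' * blkN N m b := by
  have hor : 2 * m + 2 ≤ 2 * m' ∨ 2 * m' + 2 ≤ 2 * m := by omega
  have h1 : tauN N (2 * m) * tauN N (2 * m') = tauN N (2 * m') * tauN N (2 * m) :=
    tau_tau_comm hor
  have h2 : sigN N (2 * m) * tauN N (2 * m') = tauN N (2 * m') * sigN N (2 * m) :=
    sig_tau_comm hor
  have h3 : sigN N (2 * m') * tauN N (2 * m) = tauN N (2 * m) * sigN N (2 * m') :=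
    sig_tau_comm hor.symm
  have h4 : sigN N (2 * m) * sigN N (2 * m') = sigN N (2 * m') * sigN N (2 * m) :=
    sigN_comm hor
  cases b with
  | false =>
    cases b' with
    | false => exact comm_mul (comm_mul' h1 h2) (comm_mul' h3.symm h4)
    | true => exact comm_mul' h1 h2
  | true =>
    cases b' with
    | false => exact comm_mul h1 h3.symm
    | true => exact h1

/-- iterated block product: `BprodL N o [b₀, …, bₘ]` is the product of blocks
`o, o+1, …, o+m` with types `b₀, …, bₘ`. -/
def BprodL (N : ℕ) : ℕ → List Bool → SB N
  | _, [] => 1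
  | o, b :: l => blkN N o b * BprodL N (o + 1) l

theorem BprodL_comm {N : ℕ} (g : SB N) : ∀ (l : List Bool) (o : ℕ),
    (∀ m b, o ≤ m → g * blkN N m b = blkN N m b * g) →
    g * BprodL N o l = BprodL N o l * g
  | [], o, _ => by simp [BprodL]
  | b :: l, o, h => by
    show g * (blkN N o b * BprodL N (o + 1) l) = blkN N o b * BprodL N (o + 1) l * g
    exact comm_mul (h o b le_rfl) (BprodL_comm g l (o + 1) fun m b hm => h m b (by omega))

/-- conjugation-equivalence by an invertible element commuting with all blocks below `o` -/
def ConjC (N o : ℕ) (x y : SB N) : Prop :=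
  ∃ δ δ' : SB N, δ * δ' = 1 ∧ δ' * δ = 1 ∧ δ * x = y * δ ∧
    ∀ m b, m < o → δ * blkN N m b = blkN N m b * δ

theorem ConjC.refl (N o : ℕ) (x : SB N) : ConjC N o x x :=
  ⟨1, 1, one_mul 1, one_mul 1, by rw [one_mul, mul_one], fun m b _ => by rw [one_mul, mul_one]⟩

theorem ConjC.trans {N o : ℕ} {x y z : SB N} (h1 : ConjC N o x y) (h2 : ConjC N o y z) :
    ConjC N o x z := by
  obtain ⟨δ₁, δ₁', ha1, hb1, hc1, hd1⟩ := h1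
  obtain ⟨δ₂, δ₂', ha2, hb2, hc2, hd2⟩ := h2
  refine ⟨δ₂ * δ₁, δ₁' * δ₂', ?_, ?_, ?_, ?_⟩
  · rw [mul_assoc, ← mul_assoc δ₁, ha1, one_mul, ha2]
  · rw [mul_assoc, ← mul_assoc δ₂', hb2, one_mul, hb1]
  · rw [mul_assoc, hc1, ← mul_assoc, hc2, mul_assoc]
  · intro m b hm
    rw [mul_assoc, hd1 m b hm, ← mul_assoc, hd2 m b hm, mul_assoc]

theorem BprodL_perm {N : ℕ} : ∀ {l l' : List Bool}, l.Perm l' →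
    ∀ o : ℕ, 2 * o + 2 * l.length ≤ N →
    ConjC N o (BprodL N o l) (BprodL N o l') := by
  intro l l' p
  induction p with
  | nil => exact fun o _ => ConjC.refl N o _
  | cons x p ih =>
    intro o ho
    obtain ⟨δ, δ', ha, hb, hc, hd⟩ := ih (o + 1) (by simp at ho ⊢; omega)
    refine ⟨δ, δ', ha, hb, ?_, fun m b hm => hd m b (by omega)⟩
    show δ * (blkN N o x * BprodL N (o + 1) _) = blkN N o x * BprodL N (o + 1) _ * δ
    rw [← mul_assoc, hd o x (by omega), mul_assoc, hc, ← mul_assoc]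
  | swap x y l =>
    intro o ho
    have hlen : 2 * o + 2 * (l.length + 2) ≤ N := by simpa using ho
    have H : 2 * o + 2 < N - 1 := by omega
    have hT : swapB N o * BprodL N (o + 2) l = BprodL N (o + 2) l * swapB N o :=
      BprodL_comm _ l (o + 2) fun m b hm => swapB_blk_far (Or.inr hm) b
    refine ⟨swapB N o, swapBinv N o, swapB_mul_inv N o, swapBinv_mul N o, ?_,
      fun m b hm => swapB_blk_far (Or.inl hm) b⟩
    show swapB N o * (blkN N o y * (blkN N (o + 1) x * BprodL N (o + 1 + 1) l)) =
      blkN N o x * (blkN N (o + 1) y * BprodL N (o + 1 + 1) l) * swapB N o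
    rw [← mul_assoc, swapB_blk_a H, mul_assoc, ← mul_assoc _ (blkN N (o+1) x),
      swapB_blk_c H, mul_assoc, hT]
    rw [← mul_assoc, ← mul_assoc, blkN_comm (by omega) y x]
    simp only [mul_assoc]
  | trans p q ihp ihq =>
    intro o ho
    exact (ihp o ho).trans (ihq o (by rw [← p.length_eq]; exact ho))

end Swap

section MarkovLemmas

theorem ofHZ_mul {n : ℕ} (β γ : SB n) : ofHZ (β * γ) = ofHZ β * ofHZ γ := by
  unfold ofHZ heckeOf
  rw [Algebra.TensorProduct.tmul_mul_tmul, one_mul, ← map_mul]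
  congr 1
  rw [MonoidAlgebra.of_apply, MonoidAlgebra.of_apply, MonoidAlgebra.of_apply,
    MonoidAlgebra.single_mul_single, one_mul]

theorem markov_trace {m : ℕ} (hm : 0 < m) (a b : HeckeZ m) :
    markovClass m hm (a * b) = markovClass m hm (b * a) := by
  unfold markovClass
  rw [Submodule.Quotient.eq]
  exact Submodule.subset_span (Or.inl (Or.inl ⟨⟨m, hm⟩, a, b, rfl⟩))

theorem braid_trace {m : ℕ} (hm : 0 < m) (β γ : SB m) :
    braidClass m hm (β * γ) = braidClass m hm (γ * β) := by
  unfold braidClass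
  rw [ofHZ_mul, ofHZ_mul]
  exact markov_trace hm _ _

theorem markov_conj {N : ℕ} (hN : 0 < N) {x y δ δ' : SB N} (h1 : δ * δ' = 1)
    (h2 : δ' * δ = 1) (h3 : δ * x = y * δ) :
    braidClass N hN x = braidClass N hN y := by
  have e1 : braidClass N hN x = braidClass N hN (δ' * (δ * x)) := by
    rw [← mul_assoc, h2, one_mul]
  rw [e1, h3, braid_trace, mul_assoc, h1, mul_one]

theorem iotaHZ_ofHZ {n : ℕ} (h : n ≤ n + 1) (β : SB n) :
    iotaHZ n (ofHZ β) = ofHZ (inclSB (n + 1) h β) := by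
  unfold iotaHZ ofHZ
  rw [Algebra.TensorProduct.map_tmul]
  congr 1
  unfold heckeIncl heckeOf
  rw [RingQuot.liftAlgHom_mkAlgHom_apply]
  simp only [AlgHom.coe_comp, Function.comp_apply, MonoidAlgebra.of_apply,
    MonoidAlgebra.mapDomainAlgHom_apply, MonoidAlgebra.mapDomain_single]

theorem markov_stab {n : ℕ} (hn : 0 < n) (hm : 0 < n + 1) (a : HeckeZ n) :
    markovClass (n + 1) hm (iotaHZ n a) = markovClass n hn a := by
  unfold markovClass
  rw [Submodule.Quotient.eq]
  have he : mvof (⟨n + 1, hm⟩ : Idx) (iotaHZ n a) - mvof ⟨n, hn⟩ a =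
      -(mvof (⟨n, hn⟩ : Idx) a - mvof (succI ⟨n, hn⟩) (iotaHZ n a)) := by
    rw [neg_sub]; rfl
  rw [he]
  exact Submodule.neg_mem _
    (Submodule.subset_span (Or.inl (Or.inr ⟨⟨n, hn⟩, a, rfl⟩)))

theorem braid_stab {n N : ℕ} (hn : 0 < n) (hN : 0 < N) (e : N = n + 1) (h : n ≤ N)
    (β : SB n) : braidClass N hN (inclSB N h β) = braidClass n hn β := by
  subst e
  unfold braidClass
  rw [← iotaHZ_ofHZ h β]
  exact markov_stab hn hN (ofHZ β)

end MarkovLemmas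
section Bridge

theorem prod_blk_range (N : ℕ) : ∀ (m k o : ℕ),
    ((List.range m).map (fun j => blkN N (o + j) (decide (j < k)))).prod =
      BprodL N o (List.replicate (min k m) true ++ List.replicate (m - k) false) := by
  intro m
  induction m with
  | zero => intro k o; simp [BprodL]
  | succ m ih =>
    intro k o
    rw [List.range_succ_eq_map, List.map_cons, List.prod_cons, List.map_map]
    cases k with
    | zero =>
      have hfun : ((fun j => blkN N (o + j) (decide (j < 0))) ∘ Nat.succ) =
          fun j => blkN N ((o + 1) + j) (decide (j < 0)) := by
        funext j
        have e : o + (j + 1) = (o + 1) + j := by omega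
        simp [Function.comp, e]
      rw [hfun, ih 0 (o + 1), Nat.zero_min, Nat.zero_min, Nat.sub_zero, Nat.sub_zero,
        List.replicate_zero, List.nil_append, List.nil_append, List.replicate_succ]
      rfl
    | succ k' =>
      have hfun : ((fun j => blkN N (o + j) (decide (j < k' + 1))) ∘ Nat.succ) =
          fun j => blkN N ((o + 1) + j) (decide (j < k')) := by
        funext j
        have e : o + (j + 1) = (o + 1) + j := by omega
        simp [Function.comp, e, Nat.add_lt_add_iff_right]
      rw [hfun, ih k' (o + 1), Nat.succ_min_succ, Nat.succ_sub_succ, List.replicate_succ,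
        List.cons_append, decide_eq_true (show 0 < k' + 1 by omega)]
      rfl
  
theorem W_eq {d k : ℕ} (hk : k ≤ d) :
    W d k = BprodL (2 * d) 0 (List.replicate k true ++ List.replicate (d - k) false) := by
  have h1 : W d k =
      ((List.range d).map (fun j => blkN (2 * d) (0 + j) (decide (j < k)))).prod := by
    unfold W
    congr 1
    apply List.map_congr_left
    intro j hj
    rw [show (0 : ℕ) + j = j by omega]
    by_cases hj2 : 2 * j < 2 * d - 1
    · by_cases hk2 : j < k <;> simp [hj2, hk2, blkN, tauN, sigN]
    · by_cases hk2 : j < k <;> simp [hj2, hk2, blkN, tauN, sigN]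
  rw [h1, prod_blk_range, Nat.min_eq_left hk]

private theorem tauG_congr {N : ℕ} {a b : ℕ} (ha : a < N - 1) (hb : b < N - 1) (e : a = b) :
    (tauG ⟨a, ha⟩ : SB N) = tauG ⟨b, hb⟩ := by subst e; rfl

private theorem sG_congr {N : ℕ} {a b : ℕ} (ha : a < N - 1) (hb : b < N - 1) (e : a = b) :
    (sG ⟨a, ha⟩ : SB N) = sG ⟨b, hb⟩ := by subst e; rfl

theorem shift_blkN {n N c : ℕ} (h : 2 * c + n ≤ N) {j : ℕ} (hj : 2 * j + 2 ≤ n) (b : Bool) :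
    shiftHom N (2 * c) h (blkN n j b) = blkN N (c + j) b := by
  have hj1 : 2 * j < n - 1 := by omega
  have hj2 : 2 * (c + j) < N - 1 := by omega
  have htau : shiftHom N (2 * c) h (tauN n (2 * j)) = tauN N (2 * (c + j)) := by
    rw [tauN, dif_pos hj1, tauN, dif_pos hj2]
    show shiftHom N (2 * c) h (SB.mk (FreeMonoid.of (.tau ⟨2 * j, hj1⟩))) = _
    rw [shiftHom_mk, FreeMonoid.map_of]
    exact tauG_congr _ hj2 (by show 2 * c + 2 * j = 2 * (c + j); ring)
  have hsig : shiftHom N (2 * c) h (sigN n (2 * j)) = sigN N (2 * (c + j)) := by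
    rw [sigN, dif_pos hj1, sigN, dif_pos hj2]
    show shiftHom N (2 * c) h (SB.mk (FreeMonoid.of (.pos ⟨2 * j, hj1⟩))) = _
    rw [shiftHom_mk, FreeMonoid.map_of]
    exact sG_congr _ hj2 (by show 2 * c + 2 * j = 2 * (c + j); ring)
  cases b with
  | false =>
    show shiftHom N (2 * c) h (tauN n (2 * j) * sigN n (2 * j)) = _
    rw [map_mul, htau, hsig]; rfl
  | true => exact htau

theorem shift_BprodL {n N c : ℕ} (h : 2 * c + n ≤ N) :
    ∀ (l : List Bool) (o : ℕ), 2 * o + 2 * l.length ≤ n →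
    shiftHom N (2 * c) h (BprodL n o l) = BprodL N (c + o) l
  | [], o, _ => map_one _
  | b :: l, o, hlen => by
    show shiftHom N (2 * c) h (blkN n o b * BprodL n (o + 1) l) =
      blkN N (c + o) b * BprodL N ((c + o) + 1) l
    rw [map_mul, shift_blkN h (by simp at hlen; omega) b,
      shift_BprodL h l (o + 1) (by simp at hlen; omega)]
    rfl

theorem incl_BprodL {n N : ℕ} (h : n ≤ N) (l : List Bool) (hlen : 2 * l.length ≤ n) :
    inclSB N h (BprodL n 0 l) = BprodL N 0 l := by
  have h1 : 2 * 0 + n ≤ N := by omega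
  have h2 : 2 * 0 + 2 * l.length ≤ n := by omega
  exact shift_BprodL h1 l 0 h2

theorem BprodL_append (N : ℕ) : ∀ (l1 l2 : List Bool) (o : ℕ),
    BprodL N o (l1 ++ l2) = BprodL N o l1 * BprodL N (o + l1.length) l2
  | [], l2, o => by simp [BprodL]
  | b :: l1, l2, o => by
    show blkN N o b * BprodL N (o + 1) (l1 ++ l2) =
      blkN N o b * BprodL N (o + 1) l1 * BprodL N (o + (l1.length + 1)) l2
    rw [BprodL_append N l1 l2 (o + 1), ← mul_assoc,
      show (o + 1) + l1.length = o + (l1.length + 1) from by omega]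

theorem braidClass_BprodL_cast {N N' : ℕ} (e : N = N') (hN : 0 < N) (hN' : 0 < N')
    (o : ℕ) (l : List Bool) :
    braidClass N hN (BprodL N o l) = braidClass N' hN' (BprodL N' o l) := by subst e; rfl

theorem braidClass_perm {N : ℕ} (hN : 0 < N) {l l' : List Bool} (p : l.Perm l')
    (hlen : 2 * l.length ≤ N) :
    braidClass N hN (BprodL N 0 l) = braidClass N hN (BprodL N 0 l') := by
  have hperm := BprodL_perm p 0 (show 2 * 0 + 2 * l.length ≤ N by omega)
  obtain ⟨δ, δ', h1, h2, h3, -⟩ := hperm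
  exact markov_conj hN h1 h2 h3

end Bridge
section Rot

def rotB (N : ℕ) : SB N := ((List.range (N - 1)).map (sigN N)).prod

def rotBinv (N : ℕ) : SB N := ((List.range (N - 1)).reverse.map (sinvN N)).prod

theorem prod_sig_sinv (N : ℕ) : ∀ l : List ℕ,
    (l.map (sigN N)).prod * (l.reverse.map (sinvN N)).prod = 1
  | [] => by simp
  | x :: l => by
    rw [List.map_cons, List.prod_cons, List.reverse_cons, List.map_append, List.prod_append]
    calc sigN N x * (l.map (sigN N)).prod *
        ((l.reverse.map (sinvN N)).prod * ([x].map (sinvN N)).prod)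
        = sigN N x * (((l.map (sigN N)).prod * (l.reverse.map (sinvN N)).prod) *
            ([x].map (sinvN N)).prod) := by simp only [mul_assoc]
      _ = 1 := by rw [prod_sig_sinv N l]; simp [sigN_sinvN]

theorem prod_sinv_sig (N : ℕ) : ∀ l : List ℕ,
    (l.reverse.map (sinvN N)).prod * (l.map (sigN N)).prod = 1
  | [] => by simp
  | x :: l => by
    rw [List.map_cons, List.prod_cons, List.reverse_cons, List.map_append, List.prod_append]
    have step : (l.reverse.map (sinvN N)).prod * ([x].map (sinvN N)).prod *
        (sigN N x * (l.map (sigN N)).prod)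
        = (l.reverse.map (sinvN N)).prod * ((([x].map (sinvN N)).prod * sigN N x) *
            (l.map (sigN N)).prod) := by simp only [mul_assoc]
    rw [step]
    have inner : ([x].map (sinvN N)).prod * sigN N x = 1 := by
      simp [sinvN_sigN]
    rw [inner, one_mul]
    exact prod_sinv_sig N l

theorem rotB_mul_inv (N : ℕ) : rotB N * rotBinv N = 1 := prod_sig_sinv N _

theorem rotBinv_mul (N : ℕ) : rotBinv N * rotB N = 1 := prod_sinv_sig N _

theorem rotB_split {N i : ℕ} (h : i + 1 < N - 1) :
    rotB N = ((List.range i).map (sigN N)).prod * (sigN N i * (sigN N (i + 1) *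
      (((List.range (N - 1 - (i + 2))).map (fun m => sigN N ((i + 2) + m))).prod))) := by
  have hsplit : List.range (N - 1) =
      (List.range i ++ [i, i + 1]) ++ (List.range (N - 1 - (i + 2))).map (fun m => (i + 2) + m) := by
    rw [show N - 1 = (i + 1 + 1) + (N - 1 - (i + 2)) by omega, List.range_add,
      List.range_succ, List.range_succ]
    simp [List.append_assoc]
  rw [rotB, hsplit]
  simp only [List.map_append, List.prod_append, List.map_cons, List.map_nil, List.prod_cons,
    List.prod_nil, List.map_map, mul_one, mul_assoc]
  rfl

theorem rotB_conj_sig {N i : ℕ} (h : i + 1 < N - 1) :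
    rotB N * sigN N i = sigN N (i + 1) * rotB N := by
  have hB : (((List.range (N - 1 - (i + 2))).map (fun m => sigN N ((i + 2) + m))).prod) *
      sigN N i = sigN N i *
      (((List.range (N - 1 - (i + 2))).map (fun m => sigN N ((i + 2) + m))).prod) := by
    refine (Commute.list_prod_right _ _ fun y hy => ?_).symm
    simp only [List.mem_map] at hy
    obtain ⟨m, -, rfl⟩ := hy
    exact sigN_comm (i := i) (j := (i + 2) + m) (Or.inl (by omega))
  have hA : ((List.range i).map (sigN N)).prod * sigN N (i + 1) =
      sigN N (i + 1) * ((List.range i).map (sigN N)).prod := by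
    refine Commute.list_prod_left _ _ fun y hy => ?_
    simp only [List.mem_map, List.mem_range] at hy
    obtain ⟨m, hm, rfl⟩ := hy
    exact sigN_comm (i := m) (j := i + 1) (Or.inl (by omega))
  rw [rotB_split h]
  simp only [mul_assoc]
  rw [hB, cassoc3 (sigN_braid h), cassoc hA]

theorem rotB_conj_tau {N i : ℕ} (h : i + 1 < N - 1) :
    rotB N * tauN N i = tauN N (i + 1) * rotB N := by
  have hB : (((List.range (N - 1 - (i + 2))).map (fun m => sigN N ((i + 2) + m))).prod) *
      tauN N i = tauN N i *
      (((List.range (N - 1 - (i + 2))).map (fun m => sigN N ((i + 2) + m))).prod) := by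
    refine (Commute.list_prod_right _ _ fun y hy => ?_).symm
    simp only [List.mem_map] at hy
    obtain ⟨m, -, rfl⟩ := hy
    exact (sig_tau_comm (i := (i + 2) + m) (j := i) (Or.inr (by omega))).symm
  have hA : ((List.range i).map (sigN N)).prod * tauN N (i + 1) =
      tauN N (i + 1) * ((List.range i).map (sigN N)).prod := by
    refine Commute.list_prod_left _ _ fun y hy => ?_
    simp only [List.mem_map, List.mem_range] at hy
    obtain ⟨m, hm, rfl⟩ := hy
    exact sig_tau_comm (i := m) (j := i + 1) (Or.inl (by omega))
  rw [rotB_split h]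
  simp only [mul_assoc]
  rw [hB, cassoc3 (braid_tau_up h), cassoc hA]

theorem rotB_conj_sinv {N i : ℕ} (h : i + 1 < N - 1) :
    rotB N * sinvN N i = sinvN N (i + 1) * rotB N := by
  calc rotB N * sinvN N i
      = (sinvN N (i + 1) * sigN N (i + 1)) * (rotB N * sinvN N i) := by
        rw [sinvN_sigN, one_mul]
    _ = sinvN N (i + 1) * ((sigN N (i + 1) * rotB N) * sinvN N i) := by
        simp only [mul_assoc]
    _ = sinvN N (i + 1) * ((rotB N * sigN N i) * sinvN N i) := by rw [rotB_conj_sig h]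
    _ = sinvN N (i + 1) * rotB N := by rw [mul_assoc, sigN_sinvN, mul_one]

private theorem sInvG_congr {N : ℕ} {a b : ℕ} (ha : a < N - 1) (hb : b < N - 1) (e : a = b) :
    (sInvG ⟨a, ha⟩ : SB N) = sInvG ⟨b, hb⟩ := by subst e; rfl

theorem rot_shift {n N : ℕ} (e : N = n + 1) (h0 : 0 + n ≤ N) (h1 : 1 + n ≤ N) (β : SB n) :
    rotB N * shiftHom N 0 h0 β = shiftHom N 1 h1 β * rotB N := by
  subst e
  induction β using Con.induction_on with
  | _ w =>
    show rotB (n + 1) * shiftHom (n + 1) 0 h0 (SB.mk w) =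
      shiftHom (n + 1) 1 h1 (SB.mk w) * rotB (n + 1)
    rw [shiftHom_mk, shiftHom_mk]
    induction w using FreeMonoid.recOn with
    | one => simp [map_one]
    | of_mul x xs ihw =>
      simp only [map_mul, FreeMonoid.map_of]
      have hgen : rotB (n + 1) * SB.mk (FreeMonoid.of (shiftGen (n + 1) 0 h0 x)) =
          SB.mk (FreeMonoid.of (shiftGen (n + 1) 1 h1 x)) * rotB (n + 1) := by
        cases x with
        | pos i =>
          have hv : (i : ℕ) < n - 1 := i.2
          have hlt : (i : ℕ) < (n + 1) - 1 := by omega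
          have hlt2 : (i : ℕ) + 1 < (n + 1) - 1 := by omega
          have c1a : (sG ⟨0 + (i : ℕ), by omega⟩ : SB (n + 1)) = sG ⟨(i : ℕ), hlt⟩ :=
            sG_congr (by omega) hlt (by omega)
          have c1b : (sG ⟨(i : ℕ), hlt⟩ : SB (n + 1)) = sigN (n + 1) (i : ℕ) := by
            rw [sigN, dif_pos hlt]
          have c2a : (sG ⟨1 + (i : ℕ), by omega⟩ : SB (n + 1)) = sG ⟨(i : ℕ) + 1, hlt2⟩ :=
            sG_congr (by omega) hlt2 (by omega)
          have c2b : (sG ⟨(i : ℕ) + 1, hlt2⟩ : SB (n + 1)) = sigN (n + 1) ((i : ℕ) + 1) := by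
            rw [sigN, dif_pos hlt2]
          show rotB (n + 1) * sG ⟨0 + (i : ℕ), by omega⟩ =
            sG ⟨1 + (i : ℕ), by omega⟩ * rotB (n + 1)
          rw [c1a, c1b, c2a, c2b]
          exact rotB_conj_sig hlt2
        | neg i =>
          have hv : (i : ℕ) < n - 1 := i.2
          have hlt : (i : ℕ) < (n + 1) - 1 := by omega
          have hlt2 : (i : ℕ) + 1 < (n + 1) - 1 := by omega
          have c1a : (sInvG ⟨0 + (i : ℕ), by omega⟩ : SB (n + 1)) = sInvG ⟨(i : ℕ), hlt⟩ :=
            sInvG_congr (by omega) hlt (by omega)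
          have c1b : (sInvG ⟨(i : ℕ), hlt⟩ : SB (n + 1)) = sinvN (n + 1) (i : ℕ) := by
            rw [sinvN, dif_pos hlt]
          have c2a : (sInvG ⟨1 + (i : ℕ), by omega⟩ : SB (n + 1)) = sInvG ⟨(i : ℕ) + 1, hlt2⟩ :=
            sInvG_congr (by omega) hlt2 (by omega)
          have c2b : (sInvG ⟨(i : ℕ) + 1, hlt2⟩ : SB (n + 1)) = sinvN (n + 1) ((i : ℕ) + 1) := by
            rw [sinvN, dif_pos hlt2]
          show rotB (n + 1) * sInvG ⟨0 + (i : ℕ), by omega⟩ =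
            sInvG ⟨1 + (i : ℕ), by omega⟩ * rotB (n + 1)
          rw [c1a, c1b, c2a, c2b]
          exact rotB_conj_sinv hlt2
        | tau i =>
          have hv : (i : ℕ) < n - 1 := i.2
          have hlt : (i : ℕ) < (n + 1) - 1 := by omega
          have hlt2 : (i : ℕ) + 1 < (n + 1) - 1 := by omega
          have c1a : (tauG ⟨0 + (i : ℕ), by omega⟩ : SB (n + 1)) = tauG ⟨(i : ℕ), hlt⟩ :=
            tauG_congr (by omega) hlt (by omega)
          have c1b : (tauG ⟨(i : ℕ), hlt⟩ : SB (n + 1)) = tauN (n + 1) (i : ℕ) := by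
            rw [tauN, dif_pos hlt]
          have c2a : (tauG ⟨1 + (i : ℕ), by omega⟩ : SB (n + 1)) = tauG ⟨(i : ℕ) + 1, hlt2⟩ :=
            tauG_congr (by omega) hlt2 (by omega)
          have c2b : (tauG ⟨(i : ℕ) + 1, hlt2⟩ : SB (n + 1)) = tauN (n + 1) ((i : ℕ) + 1) := by
            rw [tauN, dif_pos hlt2]
          show rotB (n + 1) * tauG ⟨0 + (i : ℕ), by omega⟩ =
            tauG ⟨1 + (i : ℕ), by omega⟩ * rotB (n + 1)
          rw [c1a, c1b, c2a, c2b]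
          exact rotB_conj_tau hlt2
      rw [← mul_assoc, hgen, mul_assoc, ihw, ← mul_assoc]

end Rot
section Parts

theorem part1 {d d' k k' : ℕ} (hd : 0 < d) (hd' : 0 < d') (hk : k ≤ d) (hk' : k' ≤ d')
    (h1 : 0 < 2 * d + 2 * d') (h2 : 0 < 2 * (d + d')) :
    braidClass (2 * d + 2 * d') h1 (starIn (2 * d + 2 * d') le_rfl (W d k) (W d' k')) =
      braidClass (2 * (d + d')) h2 (W (d + d') (k + k')) := by
  set L1 := List.replicate k true ++ List.replicate (d - k) false with hL1
  set L2 := List.replicate k' true ++ List.replicate (d' - k') false with hL2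
  have hlen1 : L1.length = d := by simp [hL1]; omega
  have hlen2 : L2.length = d' := by simp [hL2]; omega
  have estar : starIn (2 * d + 2 * d') le_rfl (W d k) (W d' k') =
      BprodL (2 * d + 2 * d') 0 (L1 ++ L2) := by
    unfold starIn
    rw [W_eq hk, W_eq hk']
    rw [incl_BprodL (by omega) L1 (by omega)]
    rw [shift_BprodL (n := 2 * d') (N := 2 * d + 2 * d') (c := d) le_rfl L2 0 (by omega)]
    rw [BprodL_append (2 * d + 2 * d') L1 L2 0,
      show (0 : ℕ) + L1.length = d + 0 by omega]
  rw [estar]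
  have hcast := braidClass_BprodL_cast (show 2 * d + 2 * d' = 2 * (d + d') by ring)
    h1 h2 0 (L1 ++ L2)
  rw [hcast]
  have hperm : (L1 ++ L2).Perm
      (List.replicate (k + k') true ++ List.replicate ((d + d') - (k + k')) false) := by
    rw [List.perm_iff_count]
    intro a
    cases a <;>
      simp [hL1, hL2, List.count_append, List.count_replicate] <;> omega
  rw [braidClass_perm h2 hperm (by simp [hL1, hL2]; omega)]
  rw [W_eq (show k + k' ≤ d + d' by omega)]

theorem part3 {d k : ℕ} (hd : 0 < d) (hk : k ≤ d) (h1 : 0 < 2 * d + 1) (h2 : 0 < 2 * d) :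
    braidClass (2 * d + 1) h1 (starIn (2 * d + 1) le_rfl (W d k) (1 : SB 1)) =
      braidClass (2 * d) h2 (W d k) := by
  unfold starIn
  rw [map_one, mul_one]
  exact braid_stab h2 h1 rfl (by omega) (W d k)

theorem part2 {d' k' : ℕ} (hd' : 0 < d') (hk' : k' ≤ d') (h1 : 0 < 1 + 2 * d')
    (h2 : 0 < 2 * d') :
    braidClass (1 + 2 * d') h1 (starIn (1 + 2 * d') le_rfl (1 : SB 1) (W d' k')) =
      braidClass (2 * d') h2 (W d' k') := by
  unfold starIn
  rw [map_one, one_mul]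
  have e : 1 + 2 * d' = 2 * d' + 1 := by omega
  have hsh : rotB (1 + 2 * d') * shiftHom (1 + 2 * d') 0 (by omega) (W d' k') =
      shiftHom (1 + 2 * d') 1 le_rfl (W d' k') * rotB (1 + 2 * d') :=
    rot_shift e (by omega) le_rfl (W d' k')
  have hc := markov_conj h1 (rotB_mul_inv (1 + 2 * d')) (rotBinv_mul (1 + 2 * d')) hsh
  refine hc.symm.trans ?_
  exact braid_stab h2 h1 e (by omega) (W d' k')

theorem part4 (h1 : 0 < 1 + 1) :
    braidClass (1 + 1) h1 (starIn (1 + 1) le_rfl (1 : SB 1) (1 : SB 1)) =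
      braidClass 1 one_pos (1 : SB 1) := by
  unfold starIn
  rw [map_one, map_one, one_mul]
  have e : (1 : SB (1 + 1)) = inclSB (1 + 1) (by omega) (1 : SB 1) := (map_one _).symm
  rw [e]
  exact braid_stab one_pos h1 rfl (by omega) 1

theorem Wclass_cast {d d' k k' : ℕ} (ed : d = d') (ek : k = k') (h1 : 0 < 2 * d)
    (h2 : 0 < 2 * d') :
    braidClass (2 * d) h1 (W d k) = braidClass (2 * d') h2 (W d' k') := by
  subst ed; subst ek; rfl

theorem W11 : W 1 1 = tauG (⟨0, by omega⟩ : Fin (2 * 1 - 1)) := by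
  unfold W
  rw [show List.range 1 = [0] from rfl, List.map_cons, List.map_nil, List.prod_cons,
    List.prod_nil]
  norm_num

theorem W10 : W 1 0 = tauG (⟨0, by omega⟩ : Fin (2 * 1 - 1)) *
    sG (⟨0, by omega⟩ : Fin (2 * 1 - 1)) := by
  unfold W
  rw [show List.range 1 = [0] from rfl, List.map_cons, List.map_nil, List.prod_cons,
    List.prod_nil]
  norm_num

end Parts
/-- For all `d, d' ≥ 0`, `0 ≤ k ≤ d` and `0 ≤ k' ≤ d'`, the equality
`[W_{d,k} ∗ W_{d',k'}, 2(d+d')] = [W_{d+d',k+k'}, 2(d+d')]` holds in `Markov(⊔SB)` (for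
`d = 0` or `d' = 0` the factor `W_{0,0}` is the trivial braid on one strand and the number of
strands is adjusted accordingly); in particular, the class of `W_{d,k}` equals the product
`X^k Y^{d-k}` of the classes `X = [τ_1, 2]` and `Y = [τ_1σ_1, 2]`. -/
theorem wclass_product_formula :
    (∀ (d d' k k' : ℕ) (hd : 0 < d) (hd' : 0 < d') (hk : k ≤ d) (hk' : k' ≤ d'),
      braidClass (2 * d + 2 * d') (by omega)
          (starIn (2 * d + 2 * d') le_rfl (W d k) (W d' k')) =
        braidClass (2 * (d + d')) (by omega) (W (d + d') (k + k'))) ∧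
    (∀ (d' k' : ℕ) (hd' : 0 < d') (hk' : k' ≤ d'),
      braidClass (1 + 2 * d') (by omega) (starIn (1 + 2 * d') le_rfl (1 : SB 1) (W d' k')) =
        braidClass (2 * d') (by omega) (W d' k')) ∧
    (∀ (d k : ℕ) (hd : 0 < d) (hk : k ≤ d),
      braidClass (2 * d + 1) (by omega) (starIn (2 * d + 1) le_rfl (W d k) (1 : SB 1)) =
        braidClass (2 * d) (by omega) (W d k)) ∧
    (braidClass (1 + 1) (by omega) (starIn (1 + 1) le_rfl (1 : SB 1) (1 : SB 1)) =
      braidClass 1 one_pos (1 : SB 1)) ∧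
    (∀ mul : Markov →ₗ[Lqz] Markov →ₗ[Lqz] Markov,
      (∀ (n m : ℕ) (hn : 0 < n) (hm : 0 < m) (α : SB n) (β : SB m),
        mul (braidClass n hn α) (braidClass m hm β) =
          braidClass (n + m) (by omega) (starIn (n + m) le_rfl α β)) →
      ∀ (d k : ℕ) (hd : 0 < d) (hk : k ≤ d),
        braidClass (2 * d) (by omega) (W d k) =
          mul (powAux mul (braidClass 1 one_pos 1)
                (braidClass 2 two_pos (tauG (⟨0, by omega⟩ : Fin (2 - 1)))) k)
              (powAux mul (braidClass 1 one_pos 1)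
                (braidClass 2 two_pos
                  (tauG (⟨0, by omega⟩ : Fin (2 - 1)) * sG (⟨0, by omega⟩ : Fin (2 - 1))))
                (d - k))) := by
  refine ⟨fun d d' k k' hd hd' hk hk' => part1 hd hd' hk hk' (by omega) (by omega),
    fun d' k' hd' hk' => part2 hd' hk' (by omega) (by omega),
    fun d k hd hk => part3 hd hk (by omega) (by omega),
    part4 (by omega), ?_⟩
  intro mul hmul d k hd hk
  have powX : ∀ k0 : ℕ, powAux mul (braidClass 1 one_pos 1)
      (braidClass 2 two_pos (tauG (⟨0, by omega⟩ : Fin (2 - 1)))) (k0 + 1) =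
      braidClass (2 * (k0 + 1)) (by omega) (W (k0 + 1) (k0 + 1)) := by
    intro k0
    induction k0 with
    | zero =>
      show mul (braidClass 2 two_pos (tauG (⟨0, by omega⟩ : Fin (2 - 1))))
        (braidClass 1 one_pos 1) = _
      have hX : braidClass 2 two_pos (tauG (⟨0, by omega⟩ : Fin (2 - 1))) =
          braidClass 2 two_pos (W 1 1) := by rw [W11]
      rw [hX, hmul 2 1 two_pos one_pos (W 1 1) (1 : SB 1)]
      exact part3 (d := 1) (k := 1) one_pos le_rfl (by omega) (by omega)
    | succ n ih =>
      show mul (braidClass 2 two_pos (tauG (⟨0, by omega⟩ : Fin (2 - 1))))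
        (powAux mul (braidClass 1 one_pos 1)
          (braidClass 2 two_pos (tauG (⟨0, by omega⟩ : Fin (2 - 1)))) (n + 1)) = _
      rw [ih]
      have hX : braidClass 2 two_pos (tauG (⟨0, by omega⟩ : Fin (2 - 1))) =
          braidClass (2 * 1) (by omega) (W 1 1) := by rw [W11]
      rw [hX, hmul (2 * 1) (2 * (n + 1)) (by omega) (by omega) (W 1 1) (W (n + 1) (n + 1)),
        part1 (d := 1) (d' := n + 1) one_pos (by omega) le_rfl le_rfl (by omega) (by omega)]
      exact Wclass_cast (by omega) (by omega) _ _
  have powY : ∀ k0 : ℕ, powAux mul (braidClass 1 one_pos 1)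
      (braidClass 2 two_pos
        (tauG (⟨0, by omega⟩ : Fin (2 - 1)) * sG (⟨0, by omega⟩ : Fin (2 - 1)))) (k0 + 1) =
      braidClass (2 * (k0 + 1)) (by omega) (W (k0 + 1) 0) := by
    intro k0
    induction k0 with
    | zero =>
      show mul (braidClass 2 two_pos
        (tauG (⟨0, by omega⟩ : Fin (2 - 1)) * sG (⟨0, by omega⟩ : Fin (2 - 1))))
        (braidClass 1 one_pos 1) = _
      have hY : braidClass 2 two_pos
          (tauG (⟨0, by omega⟩ : Fin (2 - 1)) * sG (⟨0, by omega⟩ : Fin (2 - 1))) =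
          braidClass 2 two_pos (W 1 0) := by rw [W10]
      rw [hY, hmul 2 1 two_pos one_pos (W 1 0) (1 : SB 1)]
      exact part3 (d := 1) (k := 0) one_pos (by omega) (by omega) (by omega)
    | succ n ih =>
      show mul (braidClass 2 two_pos
        (tauG (⟨0, by omega⟩ : Fin (2 - 1)) * sG (⟨0, by omega⟩ : Fin (2 - 1))))
        (powAux mul (braidClass 1 one_pos 1)
          (braidClass 2 two_pos
            (tauG (⟨0, by omega⟩ : Fin (2 - 1)) * sG (⟨0, by omega⟩ : Fin (2 - 1)))) (n + 1)) = _
      rw [ih]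
      have hY : braidClass 2 two_pos
          (tauG (⟨0, by omega⟩ : Fin (2 - 1)) * sG (⟨0, by omega⟩ : Fin (2 - 1))) =
          braidClass (2 * 1) (by omega) (W 1 0) := by rw [W10]
      rw [hY, hmul (2 * 1) (2 * (n + 1)) (by omega) (by omega) (W 1 0) (W (n + 1) 0),
        part1 (d := 1) (d' := n + 1) (k := 0) (k' := 0) one_pos (by omega) (by omega)
          (by omega) (by omega) (by omega)]
      exact Wclass_cast (by omega) (by omega) _ _
  rcases Nat.eq_zero_or_pos k with hk0 | hkpos
  · subst hk0
    obtain ⟨m, rfl⟩ : ∃ m, d = m + 1 := ⟨d - 1, by omega⟩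
    show braidClass (2 * (m + 1)) _ (W (m + 1) 0) = mul (braidClass 1 one_pos 1)
      (powAux mul (braidClass 1 one_pos 1)
        (braidClass 2 two_pos
          (tauG (⟨0, by omega⟩ : Fin (2 - 1)) * sG (⟨0, by omega⟩ : Fin (2 - 1)))) (m + 1))
    rw [powY m, hmul 1 (2 * (m + 1)) one_pos (by omega) (1 : SB 1) (W (m + 1) 0)]
    exact (part2 (d' := m + 1) (k' := 0) (by omega) (by omega) (by omega) (by omega)).symm
  · by_cases hkd : k = d
    · subst hkd
      rw [Nat.sub_self]
      obtain ⟨k0, rfl⟩ : ∃ k0, k = k0 + 1 := ⟨k - 1, by omega⟩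
      rw [powX k0]
      show braidClass (2 * (k0 + 1)) _ (W (k0 + 1) (k0 + 1)) =
        mul (braidClass (2 * (k0 + 1)) _ (W (k0 + 1) (k0 + 1))) (braidClass 1 one_pos 1)
      rw [hmul (2 * (k0 + 1)) 1 (by omega) one_pos (W (k0 + 1) (k0 + 1)) (1 : SB 1)]
      exact (part3 (by omega) le_rfl (by omega) (by omega)).symm
    · obtain ⟨m, rfl⟩ : ∃ m, d = k + (m + 1) := ⟨d - k - 1, by omega⟩
      rw [show k + (m + 1) - k = m + 1 from by omega]
      obtain ⟨k0, rfl⟩ : ∃ k0, k = k0 + 1 := ⟨k - 1, by omega⟩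
      rw [powX k0, powY m,
        hmul (2 * (k0 + 1)) (2 * (m + 1)) (by omega) (by omega) (W (k0 + 1) (k0 + 1))
          (W (m + 1) 0),
        part1 (d := k0 + 1) (d' := m + 1) (k := k0 + 1) (k' := 0) (by omega) (by omega)
          le_rfl (by omega) (by omega) (by omega)]

end
end SingularHOMFLYPT
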